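/- arXiv:1710.02665 — 2 statements merged into one kernel-verified Lean document; each statement's English description precedes it below -/
import Mathlib

section
/- Fix constants b > 0, d > 0, c ∈ ℝ, and a ∈ (0,1). The function f : (0,a] → ℝ defined by f(λ) = λ^b (d ln(1/λ))^{−c} is eventually strictly monotone near 0 and its inverse satisfies f^{−1}(λ) = λ^{1/b} ((d/b) ln(1/λ))^{c/b} (1 + o(1)) as λ → 0⁺. -/
open Real Filter

private lemma aux_log_div (k : ℝ) (hk : 0 < k) (c : ℝ) :
    Tendsto (fun t : ℝ => c * (Real.log (k * t) / t)) atTop (nhds 0) := by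
  have h1 : Tendsto (fun t : ℝ => Real.log t / t) atTop (nhds 0) :=
    Real.isLittleO_log_id_atTop.tendsto_div_nhds_zero
  have h2 : Tendsto (fun t : ℝ => Real.log k / t) atTop (nhds 0) :=
    tendsto_const_nhds.div_atTop tendsto_id
  have h3 : Tendsto (fun t : ℝ => Real.log k / t + Real.log t / t) atTop (nhds 0) := by
    simpa using h2.add h1
  have heq : (fun t : ℝ => Real.log (k * t) / t)
      =ᶠ[atTop] fun t => Real.log k / t + Real.log t / t := by
    filter_upwards [eventually_gt_atTop 0] with t ht
    rw [Real.log_mul hk.ne' ht.ne', add_div]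
  have := h3.congr' heq.symm
  simpa using (this.const_mul c)

private lemma aux_ratio (k : ℝ) (hk : 0 < k) (c : ℝ) :
    Tendsto (fun t : ℝ => t / (t - c * Real.log (k * t))) atTop (nhds 1) := by
  have h0 := aux_log_div k hk c
  have hden : Tendsto (fun t : ℝ => 1 - c * (Real.log (k * t) / t)) atTop (nhds 1) := by
    simpa using tendsto_const_nhds.sub h0
  have hinv : Tendsto (fun t : ℝ => (1 - c * (Real.log (k * t) / t))⁻¹) atTop (nhds 1) := by
    simpa using hden.inv₀ one_ne_zero
  refine hinv.congr' ?_
  filter_upwards [eventually_gt_atTop 0, hden.eventually (eventually_gt_nhds (by norm_num : (0:ℝ) < 1))] with t ht hgt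
  have hne : 1 - c * (Real.log (k * t) / t) ≠ 0 := ne_of_gt hgt
  field_simp

private lemma aux_deriv (b d c : ℝ) (hd : 0 < d) {x : ℝ} (hx : 0 < x) (hx1 : x < 1) :
    HasDerivAt (fun lam : ℝ => lam ^ b * (d * Real.log (1 / lam)) ^ (-c))
      (x ^ (b - 1) * (d * Real.log (1 / x)) ^ (-c - 1) * (d * (b * Real.log (1 / x) + c))) x := by
  have hL : 0 < Real.log (1 / x) := by
    rw [one_div, Real.log_inv]
    simpa using Real.log_neg hx hx1
  have hu : 0 < d * Real.log (1 / x) := mul_pos hd hL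
  have h1 : HasDerivAt (fun lam : ℝ => lam ^ b) (b * x ^ (b - 1)) x :=
    Real.hasDerivAt_rpow_const (Or.inl hx.ne')
  have h2 : HasDerivAt (fun lam : ℝ => 1 / lam) (-(x ^ 2)⁻¹) x := by
    simpa [one_div] using hasDerivAt_inv hx.ne'
  have h3 : HasDerivAt (fun lam : ℝ => Real.log (1 / lam)) (-x⁻¹) x := by
    have := (Real.hasDerivAt_log (by positivity : (1:ℝ)/x ≠ 0)).comp x h2
    refine this.congr_deriv ?_
    field_simp
  have h4 : HasDerivAt (fun lam : ℝ => d * Real.log (1 / lam)) (d * -x⁻¹) x := h3.const_mul d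
  have h5 : HasDerivAt (fun lam : ℝ => (d * Real.log (1 / lam)) ^ (-c))
      ((d * -x⁻¹) * (-c) * (d * Real.log (1 / x)) ^ (-c - 1)) x :=
    h4.rpow_const (Or.inl hu.ne')
  have h6 := h1.mul h5
  refine h6.congr_deriv ?_
  have e1 : (d * Real.log (1 / x)) ^ (-c) = (d * Real.log (1 / x)) ^ (-c - 1) * (d * Real.log (1 / x)) := by
    rw [← Real.rpow_add_one hu.ne' (-c - 1)]
    ring_nf
  have e2 : x ^ b = x ^ (b - 1) * x := by
    rw [← Real.rpow_add_one hx.ne' (b - 1)]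
    ring_nf
  rw [e1, e2]
  field_simp

private theorem stmt8_part1 (b d c a : ℝ) (hb : 0 < b) (hd : 0 < d)
    (ha : 0 < a) (ha1 : a < 1) :
    (∃ a' : ℝ, 0 < a' ∧ a' ≤ a ∧
      StrictMonoOn (fun lam : ℝ => lam ^ b * (d * Real.log (1 / lam)) ^ (-c))
        (Set.Ioc 0 a')) := by
  have hE : 0 < (|c| + 1) / b := by positivity
  set a' := min a (Real.exp (-((|c| + 1) / b))) with ha'def
  have ha'pos : 0 < a' := lt_min ha (Real.exp_pos _)
  have ha'le : a' ≤ a := min_le_left _ _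
  have ha'exp : a' ≤ Real.exp (-((|c| + 1) / b)) := min_le_right _ _
  have ha'1 : a' < 1 := lt_of_le_of_lt ha'exp (Real.exp_lt_one_iff.mpr (by linarith))
  refine ⟨a', ha'pos, ha'le, ?_⟩
  have key : ∀ x ∈ Set.Ioc (0:ℝ) a', 0 < x ∧ x < 1 ∧ (|c| + 1) / b ≤ Real.log (1 / x) := by
    rintro x ⟨hx0, hxa⟩
    refine ⟨hx0, lt_of_le_of_lt hxa ha'1, ?_⟩
    have hlx : Real.log x ≤ -((|c| + 1) / b) := by
      calc Real.log x ≤ Real.log a' := Real.log_le_log hx0 hxa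
        _ ≤ -((|c| + 1) / b) := by
            rw [← Real.log_exp (-((|c| + 1) / b))]
            exact Real.log_le_log ha'pos ha'exp
    rw [one_div, Real.log_inv]
    linarith
  apply strictMonoOn_of_deriv_pos (convex_Ioc 0 a')
  · intro x hx
    obtain ⟨hx0, hx1, _⟩ := key x hx
    exact (aux_deriv b d c hd hx0 hx1).continuousAt.continuousWithinAt
  · intro x hx
    rw [interior_Ioc] at hx
    obtain ⟨hx0, hx1, hL⟩ := key x ⟨hx.1, hx.2.le⟩
    rw [(aux_deriv b d c hd hx0 hx1).deriv]
    have hLpos : 0 < Real.log (1 / x) := lt_of_lt_of_le hE hL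
    have h1 : 0 < x ^ (b - 1) := Real.rpow_pos_of_pos hx0 _
    have h2 : 0 < (d * Real.log (1 / x)) ^ (-c - 1) :=
      Real.rpow_pos_of_pos (mul_pos hd hLpos) _
    have h3 : 0 < b * Real.log (1 / x) + c := by
      have : |c| + 1 ≤ b * Real.log (1 / x) := by
        rw [div_le_iff₀ hb] at hL
        linarith [hL]
      have := neg_abs_le c
      linarith
    positivity

private theorem stmt8_part2 (b d c : ℝ) (hb : 0 < b) (hd : 0 < d) :
    Filter.Tendsto
      (fun lam : ℝ =>
        (fun μ : ℝ => μ ^ b * (d * Real.log (1 / μ)) ^ (-c))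
          (lam ^ (1 / b) * ((d / b) * Real.log (1 / lam)) ^ (c / b)) / lam)
      (nhdsWithin 0 (Set.Ioi 0)) (nhds 1) := by
  set k := d / b with hkdef
  have hk : 0 < k := div_pos hd hb
  -- log(1/lam) → ∞
  have hT : Tendsto (fun lam : ℝ => Real.log (1 / lam)) (nhdsWithin 0 (Set.Ioi 0)) atTop := by
    exact (Real.tendsto_log_atTop.comp tendsto_inv_nhdsGT_zero).congr
      (fun x => by rw [Function.comp_apply, one_div])
  -- the model function tends to 1
  have hφ : Tendsto (fun lam : ℝ =>
      (Real.log (1 / lam) / (Real.log (1 / lam) - c * Real.log (k * Real.log (1 / lam)))) ^ c)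
      (nhdsWithin 0 (Set.Ioi 0)) (nhds 1) := by
    have hr := aux_ratio k hk c
    have hcont : ContinuousAt (fun x : ℝ => x ^ c) 1 :=
      Real.continuousAt_rpow_const 1 c (Or.inl one_ne_zero)
    have h1 : Tendsto (fun t : ℝ => (t / (t - c * Real.log (k * t))) ^ c) atTop (nhds 1) := by
      have := hcont.tendsto.comp hr
      simpa [Function.comp_def, Real.one_rpow] using this
    exact h1.comp hT
  -- eventual good set in atTop
  have hS : ∀ᶠ t : ℝ in atTop, 0 < t ∧ 0 < t - c * Real.log (k * t) := by
    have h0 := aux_log_div k hk c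
    have h1 : ∀ᶠ t : ℝ in atTop, c * (Real.log (k * t) / t) < 1 :=
      h0.eventually (eventually_lt_nhds one_pos)
    filter_upwards [eventually_gt_atTop 0, h1] with t ht h1t
    refine ⟨ht, ?_⟩
    have : c * Real.log (k * t) = t * (c * (Real.log (k * t) / t)) := by
      field_simp
    rw [this]
    nlinarith
  refine hφ.congr' ?_
  filter_upwards [self_mem_nhdsWithin, hT.eventually hS] with lam hlam hgood
  set L := Real.log (1 / lam) with hLdef
  obtain ⟨hL, hs⟩ := hgood
  set s := L - c * Real.log (k * L) with hsdef
  have hlam : (0:ℝ) < lam := hlam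
  have hkL : 0 < k * L := mul_pos hk hL
  have hg1 : 0 < lam ^ (1 / b) := Real.rpow_pos_of_pos hlam _
  have hg2 : 0 < (k * L) ^ (c / b) := Real.rpow_pos_of_pos hkL _
  -- g ^ b
  have hgb : (lam ^ (1 / b) * (k * L) ^ (c / b)) ^ b = lam * (k * L) ^ c := by
    rw [Real.mul_rpow hg1.le hg2.le, ← Real.rpow_mul hlam.le, ← Real.rpow_mul hkL.le,
      one_div_mul_cancel hb.ne', div_mul_cancel₀ c hb.ne', Real.rpow_one]
  -- log (1/g)
  have hloggam : Real.log lam = -L := by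
    rw [hLdef, one_div, Real.log_inv, neg_neg]
  have hlog : Real.log (1 / (lam ^ (1 / b) * (k * L) ^ (c / b))) = s / b := by
    rw [one_div, Real.log_inv, Real.log_mul hg1.ne' hg2.ne', Real.log_rpow hlam,
      Real.log_rpow hkL, hloggam, hsdef]
    field_simp
    ring
  have hdlog : d * Real.log (1 / (lam ^ (1 / b) * (k * L) ^ (c / b))) = k * s := by
    rw [hlog, hkdef]
    field_simp
  show (Real.log (1/lam) / (Real.log (1/lam) - c * Real.log (k * Real.log (1/lam)))) ^ c
      = (lam ^ (1 / b) * (k * L) ^ (c / b)) ^ b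
        * (d * Real.log (1 / (lam ^ (1 / b) * (k * L) ^ (c / b)))) ^ (-c) / lam
  rw [hgb, hdlog, ← hLdef, ← hsdef]
  rw [Real.mul_rpow hk.le hL.le, Real.mul_rpow hk.le hs.le, Real.div_rpow hL.le hs.le,
    Real.rpow_neg hk.le, Real.rpow_neg hs.le]
  have hkc : k ^ c ≠ 0 := (Real.rpow_pos_of_pos hk c).ne'
  have hsc : (0:ℝ) < s ^ c := Real.rpow_pos_of_pos hs c
  field_simp


/-- Lemma 4.1 — eventual strict monotonicity near 0 and asymptotics of
the inverse of `f(λ) = λ^b (d ln(1/λ))^{-c}`. -/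
theorem stmt8 (b d c a : ℝ) (hb : 0 < b) (hd : 0 < d)
    (ha : 0 < a) (ha1 : a < 1) :
    (∃ a' : ℝ, 0 < a' ∧ a' ≤ a ∧
      StrictMonoOn (fun lam : ℝ => lam ^ b * (d * Real.log (1 / lam)) ^ (-c))
        (Set.Ioc 0 a')) ∧
    Filter.Tendsto
      (fun lam : ℝ =>
        (fun μ : ℝ => μ ^ b * (d * Real.log (1 / μ)) ^ (-c))
          (lam ^ (1 / b) * ((d / b) * Real.log (1 / lam)) ^ (c / b)) / lam)
      (nhdsWithin 0 (Set.Ioi 0)) (nhds 1) :=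
  ⟨stmt8_part1 b d c a hb hd ha ha1, stmt8_part2 b d c hb hd⟩
end

section
/- Let μ(t) = ∫_0^t κ with κ continuous and positive, and define u(x,t) = (1/2)(erf((x+5)/(2√μ(t))) − erf((x−5)/(2√μ(t)))) for t > 0. Then u satisfies ∂_t u = κ(t) ∂_{xx} u on ℝ × (0, T), and u(x,t) → χ_{[−5,5]}(x) pointwise as t → 0⁺ for x ≠ ±5. -/
open Filter MeasureTheory

/-- The error function `erf(z) = (2/√π) ∫_0^z e^{-s²} ds`. -/
noncomputable def erf (z : ℝ) : ℝ :=
  (2 / Real.sqrt Real.pi) * ∫ s in (0:ℝ)..z, Real.exp (-s ^ 2)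

/-- The candidate solution of Example 5.3. -/
noncomputable def uErf (κ : ℝ → ℝ) (x t : ℝ) : ℝ :=
  (1 / 2) * (erf ((x + 5) / (2 * Real.sqrt (∫ ν in (0:ℝ)..t, κ ν))) -
             erf ((x - 5) / (2 * Real.sqrt (∫ ν in (0:ℝ)..t, κ ν))))

lemma erf_hasDerivAt (z : ℝ) :
    HasDerivAt erf (2 / Real.sqrt Real.pi * Real.exp (-z ^ 2)) z := by
  have hc : Continuous fun s : ℝ => Real.exp (-s ^ 2) := by continuity
  have h : HasDerivAt (fun u : ℝ => ∫ s in (0:ℝ)..u, Real.exp (-s ^ 2))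
      (Real.exp (-z ^ 2)) z :=
    intervalIntegral.integral_hasDerivAt_right (hc.intervalIntegrable _ _)
      (hc.stronglyMeasurableAtFilter _ _) hc.continuousAt
  exact h.const_mul _

lemma tendsto_erf_atTop : Tendsto erf atTop (nhds 1) := by
  have hint : IntegrableOn (fun s : ℝ => Real.exp (-s ^ 2)) (Set.Ioi 0) := by
    have := integrable_exp_neg_mul_sq (b := (1:ℝ)) one_pos
    simpa using this.integrableOn
  have h := intervalIntegral_tendsto_integral_Ioi 0 hint tendsto_id
  have hval : (∫ s in Set.Ioi (0:ℝ), Real.exp (-s ^ 2)) = Real.sqrt Real.pi / 2 := by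
    have := integral_gaussian_Ioi 1
    simpa using this
  rw [hval] at h
  have hπ : Real.sqrt Real.pi ≠ 0 := ne_of_gt (Real.sqrt_pos.mpr Real.pi_pos)
  have h2 := h.const_mul (2 / Real.sqrt Real.pi)
  have hone : 2 / Real.sqrt Real.pi * (Real.sqrt Real.pi / 2) = 1 := by field_simp
  rw [hone] at h2
  exact h2

lemma erf_neg (z : ℝ) : erf (-z) = - erf z := by
  have h := intervalIntegral.integral_comp_neg (a := z) (b := (0:ℝ))
    (fun s => Real.exp (-s ^ 2))
  simp only [neg_sq, neg_zero] at h
  rw [erf, erf, ← h, intervalIntegral.integral_symm]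
  ring

lemma tendsto_erf_atBot : Tendsto erf atBot (nhds (-1)) := by
  have h : Tendsto (fun z : ℝ => -erf (-z)) atBot (nhds (-1)) :=
    (tendsto_erf_atTop.comp tendsto_neg_atBot_atTop).neg
  simpa [erf_neg] using h

lemma erf_comp_x {r : ℝ} (hr : 0 < r) (c y : ℝ) :
    HasDerivAt (fun ξ : ℝ => erf ((ξ + c) / (2 * r)))
      (Real.exp (-((y + c) / (2 * r)) ^ 2) / (Real.sqrt Real.pi * r)) y := by
  have hπ : (0:ℝ) < Real.sqrt Real.pi := Real.sqrt_pos.mpr Real.pi_pos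
  have hin : HasDerivAt (fun ξ : ℝ => (ξ + c) / (2 * r)) (1 / (2 * r)) y := by
    simpa using ((hasDerivAt_id y).add_const c).div_const (2 * r)
  have h := (erf_hasDerivAt ((y + c) / (2 * r))).comp y hin
  refine h.congr_deriv ?_
  field_simp

lemma exp_comp_x {r : ℝ} (hr : 0 < r) (c y : ℝ) :
    HasDerivAt (fun ξ : ℝ => Real.exp (-((ξ + c) / (2 * r)) ^ 2))
      (-((y + c) * Real.exp (-((y + c) / (2 * r)) ^ 2)) / (2 * r ^ 2)) y := by
  have h1 : HasDerivAt (fun ξ : ℝ => (ξ + c) / (2 * r)) (1 / (2 * r)) y := by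
    simpa using ((hasDerivAt_id y).add_const c).div_const (2 * r)
  have hin := (h1.pow 2).neg
  have h := hin.exp
  refine h.congr_deriv ?_
  simp only [Pi.neg_apply, Pi.pow_apply]
  have hr0 : r ≠ 0 := hr.ne'
  norm_num
  field_simp

lemma erf_comp_m (c : ℝ) {r : ℝ} (hr : 0 < r) :
    HasDerivAt (fun μ : ℝ => erf (c / (2 * Real.sqrt μ)))
      (-(c * Real.exp (-(c / (2 * r)) ^ 2)) / (2 * Real.sqrt Real.pi * r ^ 3)) (r ^ 2) := by
  have hπ : (0:ℝ) < Real.sqrt Real.pi := Real.sqrt_pos.mpr Real.pi_pos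
  have hm : (0:ℝ) < r ^ 2 := by positivity
  have hsq : Real.sqrt (r ^ 2) = r := Real.sqrt_sq hr.le
  have hs : HasDerivAt (fun μ : ℝ => 2 * Real.sqrt μ) (2 * (1 / (2 * r))) (r ^ 2) := by
    have := (Real.hasDerivAt_sqrt hm.ne').const_mul 2
    rwa [hsq] at this
  have hin : HasDerivAt (fun μ : ℝ => c / (2 * Real.sqrt μ))
      ((0 * (2 * Real.sqrt (r ^ 2)) - c * (2 * (1 / (2 * r)))) / (2 * Real.sqrt (r ^ 2)) ^ 2)
      (r ^ 2) := by
    exact (hasDerivAt_const _ c).div hs (by rw [hsq]; positivity)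
  have h := (erf_hasDerivAt (c / (2 * Real.sqrt (r ^ 2)))).comp (r ^ 2) hin
  rw [hsq] at h
  refine h.congr_deriv ?_
  field_simp
  ring

/-- the erf-based function solves the heat equation on `ℝ × (0,T)` and
converges pointwise to the indicator of `[-5,5]` as `t → 0⁺` (for `x ≠ ±5`). -/
theorem stmt17 (T : ℝ) (hT : 0 < T) (κ : ℝ → ℝ) (hκ : Continuous κ)
    (hκpos : ∀ ν ∈ Set.Icc 0 T, 0 < κ ν) :
    (∀ x : ℝ, ∀ t ∈ Set.Ioo 0 T,
      HasDerivAt (fun τ : ℝ => uErf κ x τ)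
        (κ t * deriv (deriv (fun ξ : ℝ => uErf κ ξ t)) x) t) ∧
    (∀ x : ℝ, x ≠ 5 → x ≠ -5 →
      Filter.Tendsto (fun t : ℝ => uErf κ x t) (nhdsWithin 0 (Set.Ioi 0))
        (nhds (Set.indicator (Set.Icc (-5 : ℝ) 5) (fun _ => (1 : ℝ)) x))) := by
  constructor
  · intro x t ht
    set m : ℝ := ∫ ν in (0:ℝ)..t, κ ν with hm_def
    have hm : 0 < m := intervalIntegral.intervalIntegral_pos_of_pos_on
      (hκ.intervalIntegrable _ _)
      (fun ν hν => hκpos ν ⟨hν.1.le, hν.2.le.trans ht.2.le⟩) ht.1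
    set r : ℝ := Real.sqrt m with hr_def
    have hr : 0 < r := Real.sqrt_pos.mpr hm
    have hr2 : r ^ 2 = m := Real.sq_sqrt hm.le
    have hπ : (0:ℝ) < Real.sqrt Real.pi := Real.sqrt_pos.mpr Real.pi_pos
    set A : ℝ → ℝ := fun y => Real.exp (-((y + 5) / (2 * r)) ^ 2) with hA
    set B : ℝ → ℝ := fun y => Real.exp (-((y - 5) / (2 * r)) ^ 2) with hB
    have hderiv1 : ∀ y : ℝ, HasDerivAt (fun ξ : ℝ => uErf κ ξ t)
        ((A y - B y) / (2 * Real.sqrt Real.pi * r)) y := by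
      intro y
      have h1 := erf_comp_x hr 5 y
      have h2 : HasDerivAt (fun ξ : ℝ => erf ((ξ - 5) / (2 * r)))
          (Real.exp (-((y - 5) / (2 * r)) ^ 2) / (Real.sqrt Real.pi * r)) y := by
        simpa [← sub_eq_add_neg] using erf_comp_x hr (-5) y
      have h := (h1.sub h2).const_mul (1/2 : ℝ)
      change HasDerivAt (fun ξ : ℝ => (1/2 : ℝ) * (erf ((ξ + 5) / (2 * r)) - erf ((ξ - 5) / (2 * r)))) _ y at h
      have hfun : (fun ξ : ℝ => (1/2 : ℝ) * (erf ((ξ + 5) / (2 * r)) - erf ((ξ - 5) / (2 * r))))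
          = fun ξ : ℝ => uErf κ ξ t := by
        funext ξ
        simp [uErf, ← hm_def, ← hr_def]
      rw [hfun] at h
      have key : ∀ a b : ℝ, (a - b) / (2 * Real.sqrt Real.pi * r)
          = 1/2 * (a / (Real.sqrt Real.pi * r) - b / (Real.sqrt Real.pi * r)) := by
        intro a b; ring
      simpa only [hA, hB, key] using h
    have hF : deriv (fun ξ : ℝ => uErf κ ξ t)
        = fun y => (A y - B y) / (2 * Real.sqrt Real.pi * r) :=
      funext fun y => (hderiv1 y).deriv
    have hderiv2 : HasDerivAt (fun y => (A y - B y) / (2 * Real.sqrt Real.pi * r))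
        (((x - 5) * B x - (x + 5) * A x) / (4 * Real.sqrt Real.pi * r ^ 3)) x := by
      have h1 := exp_comp_x hr 5 x
      have h2 : HasDerivAt (fun ξ : ℝ => Real.exp (-((ξ - 5) / (2 * r)) ^ 2))
          (-((x - 5) * Real.exp (-((x - 5) / (2 * r)) ^ 2)) / (2 * r ^ 2)) x := by
        simpa [← sub_eq_add_neg] using exp_comp_x hr (-5) x
      have h := (h1.sub h2).div_const (2 * Real.sqrt Real.pi * r)
      change HasDerivAt (fun y => (Real.exp (-((y + 5) / (2 * r)) ^ 2) - Real.exp (-((y - 5) / (2 * r)) ^ 2)) / (2 * Real.sqrt Real.pi * r)) _ x at h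
      have key : ∀ a b : ℝ, ((x - 5) * b - (x + 5) * a) / (4 * Real.sqrt Real.pi * r ^ 3)
          = (-((x + 5) * a) / (2 * r ^ 2) - -((x - 5) * b) / (2 * r ^ 2))
            / (2 * Real.sqrt Real.pi * r) := by
        intro a b; ring
      simpa only [hA, hB, key] using h
    have hD : deriv (deriv (fun ξ : ℝ => uErf κ ξ t)) x
        = ((x - 5) * B x - (x + 5) * A x) / (4 * Real.sqrt Real.pi * r ^ 3) := by
      rw [hF]; exact hderiv2.deriv
    rw [hD]
    have hμ : HasDerivAt (fun τ : ℝ => ∫ ν in (0:ℝ)..τ, κ ν) (κ t) t :=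
      intervalIntegral.integral_hasDerivAt_right (hκ.intervalIntegrable _ _)
        (hκ.stronglyMeasurableAtFilter _ _) hκ.continuousAt
    have h5 : HasDerivAt (fun μ' : ℝ => erf ((x + 5) / (2 * Real.sqrt μ')))
        (-((x + 5) * Real.exp (-((x + 5) / (2 * r)) ^ 2)) / (2 * Real.sqrt Real.pi * r ^ 3))
        (∫ ν in (0:ℝ)..t, κ ν) := by
      have := erf_comp_m (x + 5) hr
      rw [hr2] at this
      rw [hm_def] at this
      exact this
    have h6 : HasDerivAt (fun μ' : ℝ => erf ((x - 5) / (2 * Real.sqrt μ')))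
        (-((x - 5) * Real.exp (-((x - 5) / (2 * r)) ^ 2)) / (2 * Real.sqrt Real.pi * r ^ 3))
        (∫ ν in (0:ℝ)..t, κ ν) := by
      have := erf_comp_m (x - 5) hr
      rw [hr2] at this
      rw [hm_def] at this
      exact this
    have h56 := (((h5.comp t hμ).sub (h6.comp t hμ)).const_mul (1/2 : ℝ))
    have key : ∀ a b : ℝ, κ t * (((x - 5) * b - (x + 5) * a) / (4 * Real.sqrt Real.pi * r ^ 3))
        = 1/2 * (-((x + 5) * a) / (2 * Real.sqrt Real.pi * r ^ 3) * κ t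
            - -((x - 5) * b) / (2 * Real.sqrt Real.pi * r ^ 3) * κ t) := by
      intro a b; ring
    refine h56.congr_deriv ?_
    simp only [hA, hB]
    exact (key _ _).symm
  · intro x hx5 hxm5
    have hcont : Continuous fun t : ℝ => ∫ ν in (0:ℝ)..t, κ ν :=
      intervalIntegral.continuous_primitive (fun a b => hκ.intervalIntegrable a b) 0
    have hμ0 : Tendsto (fun t : ℝ => ∫ ν in (0:ℝ)..t, κ ν)
        (nhdsWithin 0 (Set.Ioi 0)) (nhds 0) := by
      have := (hcont.tendsto 0).mono_left (nhdsWithin_le_nhds : nhdsWithin (0:ℝ) (Set.Ioi 0) ≤ nhds 0)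
      simpa using this
    have hμpos : ∀ᶠ t in nhdsWithin (0:ℝ) (Set.Ioi 0),
        0 < ∫ ν in (0:ℝ)..t, κ ν := by
      have h0T : (0:ℝ) ∈ Set.Ico (0:ℝ) T := ⟨le_refl 0, hT⟩
      have hmem : Set.Ioo (0:ℝ) T ∈ nhdsWithin (0:ℝ) (Set.Ioi 0) :=
        Ioo_mem_nhdsGT_of_mem h0T
      filter_upwards [hmem] with t htT
      exact intervalIntegral.intervalIntegral_pos_of_pos_on
        (hκ.intervalIntegrable _ _)
        (fun ν hν => hκpos ν ⟨hν.1.le, hν.2.le.trans htT.2.le⟩) htT.1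
    have hsq0 : Tendsto (fun t : ℝ => 2 * Real.sqrt (∫ ν in (0:ℝ)..t, κ ν))
        (nhdsWithin 0 (Set.Ioi 0)) (nhdsWithin 0 (Set.Ioi 0)) := by
      rw [tendsto_nhdsWithin_iff]
      constructor
      · have h := (Real.continuous_sqrt.tendsto 0).comp hμ0
        have h2 := h.const_mul (2:ℝ)
        simpa [Function.comp] using h2
      · filter_upwards [hμpos] with t htpos
        exact mul_pos two_pos (Real.sqrt_pos.mpr htpos)
    have htop : ∀ c : ℝ, 0 < c →
        Tendsto (fun t : ℝ => c / (2 * Real.sqrt (∫ ν in (0:ℝ)..t, κ ν)))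
          (nhdsWithin 0 (Set.Ioi 0)) atTop := by
      intro c hc
      simpa [div_eq_mul_inv] using hsq0.inv_tendsto_nhdsGT_zero.const_mul_atTop hc
    have hbot : ∀ c : ℝ, c < 0 →
        Tendsto (fun t : ℝ => c / (2 * Real.sqrt (∫ ν in (0:ℝ)..t, κ ν)))
          (nhdsWithin 0 (Set.Ioi 0)) atBot := by
      intro c hc
      have h := tendsto_neg_atTop_atBot.comp (htop (-c) (by linarith))
      simpa [Function.comp_def, neg_div, neg_neg] using h
    rcases lt_trichotomy x (-5) with hx | hx | hx
    · have h1 := tendsto_erf_atBot.comp (hbot (x + 5) (by linarith))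
      have h2 := tendsto_erf_atBot.comp (hbot (x - 5) (by linarith))
      have h := (h1.sub h2).const_mul (1/2 : ℝ)
      norm_num at h
      have hind : Set.indicator (Set.Icc (-5:ℝ) 5) (fun _ => (1:ℝ)) x = 0 :=
        Set.indicator_of_notMem (by simp only [Set.mem_Icc, not_and_or, not_le]; left; linarith) _
      rw [hind]
      simpa [uErf, Function.comp] using h
    · exact absurd hx hxm5
    · rcases lt_trichotomy x 5 with hx' | hx' | hx'
      · have h1 := tendsto_erf_atTop.comp (htop (x + 5) (by linarith))
        have h2 := tendsto_erf_atBot.comp (hbot (x - 5) (by linarith))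
        have h := (h1.sub h2).const_mul (1/2 : ℝ)
        norm_num at h
        have hind : Set.indicator (Set.Icc (-5:ℝ) 5) (fun _ => (1:ℝ)) x = 1 :=
          Set.indicator_of_mem (Set.mem_Icc.mpr ⟨by linarith, by linarith⟩) _
        rw [hind]
        simpa [uErf, Function.comp] using h
      · exact absurd hx' hx5
      · have h1 := tendsto_erf_atTop.comp (htop (x + 5) (by linarith))
        have h2 := tendsto_erf_atTop.comp (htop (x - 5) (by linarith))
        have h := (h1.sub h2).const_mul (1/2 : ℝ)
        norm_num at h
        have hind : Set.indicator (Set.Icc (-5:ℝ) 5) (fun _ => (1:ℝ)) x = 0 :=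
          Set.indicator_of_notMem (by simp only [Set.mem_Icc, not_and_or, not_le]; right; linarith) _
        rw [hind]
        simpa [uErf, Function.comp] using h
end
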